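/- Let C, D be linear codes in F_q^n with generator matrices G_C (k_C × n, rows spanning C) and G_D, and parity check matrices H_C, H_D (rows spanning C^⊥, D^⊥ respectively). If the matrix G_C H_D^T has a right inverse, then C ∩ D = {0}. -/
import Mathlib


open Module

/-- If the rows of `GC` span `C`, `HD` is a parity-check matrix of `D`
(i.e. `x ∈ D ↔ HD x^T = 0`), and `GC * HDᵀ` is right-invertible, then `C ∩ D = {0}`. -/
theorem stmt4 {F : Type*} [Field F] {n kC kH : ℕ} (C D : Submodule F (Fin n → F))
    (GC : Matrix (Fin kC) (Fin n) F) (HD : Matrix (Fin kH) (Fin n) F)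
    (hGC : C = Submodule.span F (Set.range fun i => GC i))
    (hHD : ∀ x : Fin n → F, x ∈ D ↔ HD.mulVec x = 0)
    (hinv : ∃ M : Matrix (Fin kH) (Fin kC) F, GC * HD.transpose * M = 1) :
    C ⊓ D = ⊥ := by
  obtain ⟨M, hM⟩ := hinv
  rw [eq_bot_iff]
  intro x hx
  obtain ⟨hxC, hxD⟩ := Submodule.mem_inf.mp hx
  rw [hGC, Submodule.mem_span_range_iff_exists_fun] at hxC
  obtain ⟨c, hc⟩ := hxC
  have hx : x = Matrix.vecMul c GC := by
    rw [← hc]; ext j; simp [Matrix.vecMul, dotProduct, Finset.sum_apply]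
  have hHx : HD.mulVec x = 0 := (hHD x).mp hxD
  have h1 : Matrix.vecMul c (GC * HD.transpose) = 0 := by
    rw [← Matrix.vecMul_vecMul, ← hx]
    ext i
    have h2 := congrFun hHx i
    simp [Matrix.vecMul, Matrix.mulVec, dotProduct, Matrix.transpose] at h2 ⊢
    rw [← h2]
    exact Finset.sum_congr rfl fun j _ => mul_comm _ _
  have hc0 : c = 0 := by
    have := congrArg (Matrix.vecMul c) hM.symm
    rwa [Matrix.vecMul_one, ← Matrix.vecMul_vecMul, h1, Matrix.zero_vecMul] at this
  simp [hx, hc0, Matrix.zero_vecMul]
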